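/- Every direction of a mixed expansion admits a dropler effect from the mixed expansion as source: let σ : Fin l → Fin n with l ≥ 1, let M = E_{σ(1)} ∘ ⋯ ∘ E_{σ(l)}, let S be a tuple, let j : Fin l, and let Φ be the least positive integer with E_{σ(j)}^Φ S = 0. Then E_{σ(j)}^{Φ−1} (M S) = 0; in particular there exists k < Φ with E_{σ(j)}^k (M S) = 0. -/

import Mathlib

open MvPolynomial MeasureTheory

/-- The expansion operator in direction `i`: the paper's composite map
`(γ⁻¹ ∘ β ∘ γ ∘ ∇)_{[x_i]}`, sending a tuple `S` to the tuple whose `k`-th entry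
is the sum of the partial derivatives (in direction `i`) of all other entries. -/
noncomputable def expandDir {s n : ℕ} (i : Fin n) (S : Fin s → MvPolynomial (Fin n) ℝ) :
    Fin s → MvPolynomial (Fin n) ℝ :=
  fun k => ∑ t ∈ Finset.univ.filter (fun t => t ≠ k), MvPolynomial.pderiv i (S t)

/-- The mixed expansion operator `M = E_{σ 0} ∘ E_{σ 1} ∘ ⋯ ∘ E_{σ (l-1)}`. -/
noncomputable def mixedExpand {s n l : ℕ} (σ : Fin l → Fin n) :
    (Fin s → MvPolynomial (Fin n) ℝ) → (Fin s → MvPolynomial (Fin n) ℝ) :=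
  (List.ofFn (fun i => expandDir (s := s) (σ i))).foldr (fun f g => f ∘ g) id

theorem pderiv_comm' {N : Type*} [DecidableEq N] {R : Type*} [CommSemiring R] (i j : N)
    (p : MvPolynomial N R) : pderiv i (pderiv j p) = pderiv j (pderiv i p) := by
  induction p using MvPolynomial.induction_on' with
  | add p q hp hq => simp [hp, hq]
  | monomial s a =>
    rcases eq_or_ne i j with rfl | hij
    · rfl
    · simp only [pderiv_monomial]
      rw [Finsupp.tsub_apply, Finsupp.tsub_apply, Finsupp.single_eq_of_ne hij,
        Finsupp.single_eq_of_ne (Ne.symm hij), tsub_tsub, tsub_tsub, add_comm]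
      simp [mul_right_comm]

theorem expandDir_zero {s n : ℕ} (i : Fin n) : expandDir (s := s) i 0 = 0 := by
  funext k; simp [expandDir]

theorem expandDir_commute {s n : ℕ} (i i' : Fin n) :
    Function.Commute (expandDir (s := s) i) (expandDir i') := by
  intro S
  funext k
  simp only [Function.comp_apply, expandDir, map_sum]
  exact Finset.sum_congr rfl fun t _ => Finset.sum_congr rfl fun u _ => pderiv_comm' _ _ _

/-- Fold of a list of expansion operators. -/
noncomputable def foldE {s n : ℕ} (L : List (Fin n)) :
    (Fin s → MvPolynomial (Fin n) ℝ) → (Fin s → MvPolynomial (Fin n) ℝ) :=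
  (L.map (expandDir (s := s))).foldr (fun f g => f ∘ g) id

theorem foldE_zero {s n : ℕ} (L : List (Fin n)) : foldE (s := s) L 0 = 0 := by
  induction L with
  | nil => rfl
  | cons a L ih => simp [foldE, List.foldr_cons] at ih ⊢; rw [ih, expandDir_zero]

theorem foldE_comm {s n : ℕ} (i : Fin n) (m : ℕ) (L : List (Fin n))
    (S : Fin s → MvPolynomial (Fin n) ℝ) :
    (expandDir i)^[m] (foldE L S) = foldE L ((expandDir i)^[m] S) := by
  induction L generalizing S with
  | nil => rfl
  | cons a L ih =>
    simp only [foldE, List.map_cons, List.foldr_cons, Function.comp_apply] at ih ⊢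
    rw [(expandDir_commute i a).iterate_left m _, ih]

theorem foldE_key {s n : ℕ} (i : Fin n) (m : ℕ) (L : List (Fin n)) (hi : i ∈ L)
    (S : Fin s → MvPolynomial (Fin n) ℝ) (hS : (expandDir i)^[m + 1] S = 0) :
    (expandDir i)^[m] (foldE L S) = 0 := by
  induction L generalizing S with
  | nil => cases hi
  | cons a L ih =>
    simp only [foldE, List.map_cons, List.foldr_cons, Function.comp_apply] at ih ⊢
    rcases List.mem_cons.mp hi with rfl | hiL
    · have : (expandDir i)^[m] (expandDir i (foldE L S)) = (expandDir i)^[m + 1] (foldE L S) := by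
        rw [Function.iterate_succ_apply]
      rw [show ((L.map (expandDir (s := s))).foldr (fun f g => f ∘ g) id) S = foldE L S from rfl,
        this, foldE_comm, hS, foldE_zero]
    · rw [(expandDir_commute i a).iterate_left m _,
        ih hiL S hS, expandDir_zero]

/-- every direction of a mixed expansion admits a dropler effect from the
mixed expansion as source. -/
theorem dropler_from_mixed_source (s n l : ℕ) (hl : 1 ≤ l) (σ : Fin l → Fin n)
    (j : Fin l) (S : Fin s → MvPolynomial (Fin n) ℝ) (Φ : ℕ)
    (hΦ : IsLeast {m | 0 < m ∧ (expandDir (σ j))^[m] S = 0} Φ) :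
    (expandDir (σ j))^[Φ - 1] (mixedExpand σ S) = 0 ∧
      ∃ k : ℕ, k < Φ ∧ (expandDir (σ j))^[k] (mixedExpand σ S) = 0 := by
  obtain ⟨⟨hpos, hE⟩, _⟩ := hΦ
  have hM : mixedExpand σ S = foldE (s := s) (List.ofFn σ) S := by
    unfold mixedExpand foldE
    rw [List.map_ofFn]
    rfl
  have hmem : σ j ∈ List.ofFn σ := (List.mem_ofFn (f := σ) (a := σ j)).mpr ⟨j, rfl⟩
  have hS : (expandDir (σ j))^[Φ - 1 + 1] S = 0 := by
    rwa [Nat.sub_add_cancel hpos]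
  have h0 : (expandDir (σ j))^[Φ - 1] (mixedExpand σ S) = 0 := by
    rw [hM]; exact foldE_key _ _ _ hmem S hS
  exact ⟨h0, Φ - 1, Nat.sub_lt hpos one_pos, h0⟩
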